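/- arXiv:1112.5563 — 2 statements merged into one kernel-verified Lean document; each statement's English description precedes it below -/
import Mathlib

section
/- In a semi-additive category, composition is bilinear with respect to the canonical commutative monoid structure on Hom-sets: h ∘ (f + g) = h∘f + h∘g and (f + g) ∘ k = f∘k + g∘k, and h ∘ 0 = 0 = 0 ∘ k. -/
open CategoryTheory CategoryTheory.Limits

universe v u

variable {C : Type u} [Category.{v} C] [HasZeroObject C] [HasZeroMorphisms C]
  [HasBinaryProducts C] [HasBinaryCoproducts C]

/-- The canonical comparison map `x ⊔ y ⟶ x × y`. -/
noncomputable def canMap (x y : C) : (x ⨿ y) ⟶ (x ⨯ y) :=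
  coprod.desc (prod.lift (𝟙 x) 0) (prod.lift 0 (𝟙 y))

variable [∀ x y : C, IsIso (canMap x y)]

/-- The canonical addition on Hom-sets of a semi-additive category. -/
noncomputable def homAdd {x y : C} (f g : x ⟶ y) : x ⟶ y :=
  prod.lift f g ≫ inv (canMap y y) ≫ coprod.desc (𝟙 y) (𝟙 y)


lemma canMap_natural {y z : C} (h : y ⟶ z) :
    canMap y y ≫ prod.map h h = coprod.map h h ≫ canMap z z := by
  apply coprod.hom_ext <;> apply Limits.prod.hom_ext <;>
    simp [canMap]

lemma inv_canMap_natural {y z : C} (h : y ⟶ z) :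
    inv (canMap y y) ≫ coprod.map h h = prod.map h h ≫ inv (canMap z z) := by
  rw [IsIso.inv_comp_eq, ← Category.assoc, canMap_natural, Category.assoc,
    IsIso.hom_inv_id, Category.comp_id]

/-- In a semi-additive category, composition is bilinear with respect to the canonical
commutative monoid structure on Hom-sets: `h ∘ (f + g) = h∘f + h∘g`,
`(f + g) ∘ k = f∘k + g∘k`, `h ∘ 0 = 0` and `0 ∘ k = 0`. -/
theorem comp_bilinear_homAdd :
    (∀ (x y z : C) (f g : x ⟶ y) (h : y ⟶ z),
      homAdd f g ≫ h = homAdd (f ≫ h) (g ≫ h)) ∧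
    (∀ (w x y : C) (k : w ⟶ x) (f g : x ⟶ y),
      k ≫ homAdd f g = homAdd (k ≫ f) (k ≫ g)) ∧
    (∀ (x y z : C) (h : y ⟶ z), (0 : x ⟶ y) ≫ h = 0) ∧
    (∀ (w x y : C) (k : w ⟶ x), k ≫ (0 : x ⟶ y) = 0) := by
  refine ⟨?_, ?_, fun _ _ _ h => zero_comp, fun _ _ _ k => comp_zero⟩
  · intro x y z f g h
    have : coprod.desc (𝟙 y) (𝟙 y) ≫ h = coprod.map h h ≫ coprod.desc (𝟙 z) (𝟙 z) := by
      apply coprod.hom_ext <;> simp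
    rw [homAdd, Category.assoc, Category.assoc, this, ← Category.assoc (inv (canMap y y)),
      inv_canMap_natural, homAdd, ← Category.assoc, ← Category.assoc,
      ← Category.assoc, prod.lift_map, Category.assoc]
  · intro w x y k f g
    rw [homAdd, homAdd, ← Category.assoc]
    congr 1
    apply Limits.prod.hom_ext <;> simp
end

section
/- Group completion of a semi-additive category: given a semi-additive category C, the category C⁻¹ with the same objects and Hom-sets the Grothendieck group completions of the Hom-monoids of C is an additive category, the canonical functor α : C → C⁻¹ is additive, and for every additive category D, precomposition with α gives a bijection (indeed isomorphism of categories) between additive functors C⁻¹ → D and additive functors C → D. -/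
open CategoryTheory CategoryTheory.Limits

universe v u v' u' v'' u''

/-- A category enriched in commutative monoids: each Hom-set is a commutative additive
monoid, and composition is bilinear and compatible with the zero morphisms. -/
class CMonEnriched (C : Type u) [Category.{v} C] where
  homMonoid : ∀ x y : C, AddCommMonoid (x ⟶ y)
  add_comp : ∀ ⦃x y z : C⦄ (f g : x ⟶ y) (h : y ⟶ z), (f + g) ≫ h = f ≫ h + g ≫ h
  comp_add : ∀ ⦃x y z : C⦄ (f : x ⟶ y) (g h : y ⟶ z), f ≫ (g + h) = f ≫ g + f ≫ h
  zero_comp : ∀ ⦃x y z : C⦄ (h : y ⟶ z), (0 : x ⟶ y) ≫ h = 0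
  comp_zero : ∀ ⦃x y z : C⦄ (f : x ⟶ y), f ≫ (0 : y ⟶ z) = 0

attribute [instance] CMonEnriched.homMonoid

/-- The zero-morphism structure underlying a commutative-monoid enrichment. -/
instance (priority := 100) CMonEnriched.toHasZeroMorphisms (C : Type u) [Category.{v} C]
    [CMonEnriched C] : HasZeroMorphisms C where
  zero x y := ⟨0⟩
  comp_zero f _ := CMonEnriched.comp_zero f
  zero_comp _ _ _ h := CMonEnriched.zero_comp h

section Aux

variable {C : Type u} [Category.{v} C] [CMonEnriched C]
variable {D : Type u'} [Category.{v'} D] [Preadditive D]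
variable {E : Type u''} [Category.{v''} E] [Preadditive E]
variable (α : C ⥤ D) (F : C ⥤ E)

/-- total identity for biproducts in a CMon-enriched category -/
theorem gcAux_total [HasBinaryBiproducts C] (x y : C) :
    (biprod.fst : x ⊞ y ⟶ x) ≫ biprod.inl + (biprod.snd : x ⊞ y ⟶ y) ≫ biprod.inr
      = 𝟙 (x ⊞ y) := by
  apply biprod.hom_ext'
  · rw [CMonEnriched.comp_add, ← Category.assoc, ← Category.assoc, biprod.inl_fst,
      biprod.inl_snd, CMonEnriched.zero_comp, Category.id_comp, Category.comp_id, add_zero]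
  · rw [CMonEnriched.comp_add, ← Category.assoc, ← Category.assoc, biprod.inr_fst,
      biprod.inr_snd, CMonEnriched.zero_comp, Category.id_comp, Category.comp_id, zero_add]

variable (hsurj : ∀ {x y : C} (g : α.obj x ⟶ α.obj y), ∃ f f' : x ⟶ y, g = α.map f - α.map f')

noncomputable def gcPhi {x y : C} (g : α.obj x ⟶ α.obj y) : F.obj x ⟶ F.obj y :=
  F.map (hsurj g).choose - F.map (hsurj g).choose_spec.choose

theorem gcPhi_diff
    (hadd : ∀ {x y : C} (f g : x ⟶ y), α.map (f + g) = α.map f + α.map g)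
    (hker : ∀ {x y : C} (f f' : x ⟶ y), α.map f = α.map f' ↔ ∃ h : x ⟶ y, f + h = f' + h)
    (hFadd : ∀ {x y : C} (f g : x ⟶ y), F.map (f + g) = F.map f + F.map g)
    {x y : C} (f f' : x ⟶ y) :
    gcPhi α F hsurj (α.map f - α.map f') = F.map f - F.map f' := by
  set g : α.obj x ⟶ α.obj y := α.map f - α.map f' with hg
  have hk : g = α.map (hsurj g).choose - α.map (hsurj g).choose_spec.choose :=
    (hsurj g).choose_spec.choose_spec
  set k := (hsurj g).choose
  set k' := (hsurj g).choose_spec.choose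
  have h1 : α.map (f + k') = α.map (k + f') := by
    rw [hadd, hadd]
    have := hg.symm.trans hk
    rw [sub_eq_sub_iff_add_eq_add] at this
    exact this
  obtain ⟨h, hh⟩ := (hker _ _).1 h1
  have h2 : F.map f + F.map k' + F.map h = F.map k + F.map f' + F.map h := by
    rw [← hFadd, ← hFadd, ← hFadd, ← hFadd, hh]
  rw [gcPhi]
  have := add_right_cancel h2
  rw [sub_eq_sub_iff_add_eq_add]
  exact this.symm


theorem gcPhi_map
    (hadd : ∀ {x y : C} (f g : x ⟶ y), α.map (f + g) = α.map f + α.map g)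
    (hzero : ∀ x y : C, α.map (0 : x ⟶ y) = 0)
    (hker : ∀ {x y : C} (f f' : x ⟶ y), α.map f = α.map f' ↔ ∃ h : x ⟶ y, f + h = f' + h)
    (hFadd : ∀ {x y : C} (f g : x ⟶ y), F.map (f + g) = F.map f + F.map g)
    (hFzero : ∀ x y : C, F.map (0 : x ⟶ y) = 0)
    {x y : C} (f : x ⟶ y) :
    gcPhi α F hsurj (α.map f) = F.map f := by
  have : α.map f = α.map f - α.map (0 : x ⟶ y) := by rw [hzero, sub_zero]
  rw [this, gcPhi_diff α F hsurj hadd hker hFadd, hFzero, sub_zero]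

theorem gcPhi_add
    (hadd : ∀ {x y : C} (f g : x ⟶ y), α.map (f + g) = α.map f + α.map g)
    (hker : ∀ {x y : C} (f f' : x ⟶ y), α.map f = α.map f' ↔ ∃ h : x ⟶ y, f + h = f' + h)
    (hFadd : ∀ {x y : C} (f g : x ⟶ y), F.map (f + g) = F.map f + F.map g)
    {x y : C} (g g' : α.obj x ⟶ α.obj y) :
    gcPhi α F hsurj (g + g') = gcPhi α F hsurj g + gcPhi α F hsurj g' := by
  obtain ⟨f, f', rfl⟩ := hsurj g
  obtain ⟨k, k', rfl⟩ := hsurj g'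
  have h1 : α.map f - α.map f' + (α.map k - α.map k')
      = α.map (f + k) - α.map (f' + k') := by rw [hadd, hadd]; abel
  rw [h1, gcPhi_diff α F hsurj hadd hker hFadd, gcPhi_diff α F hsurj hadd hker hFadd,
    gcPhi_diff α F hsurj hadd hker hFadd, hFadd, hFadd]
  abel

theorem gcPhi_comp
    (hadd : ∀ {x y : C} (f g : x ⟶ y), α.map (f + g) = α.map f + α.map g)
    (hker : ∀ {x y : C} (f f' : x ⟶ y), α.map f = α.map f' ↔ ∃ h : x ⟶ y, f + h = f' + h)
    (hFadd : ∀ {x y : C} (f g : x ⟶ y), F.map (f + g) = F.map f + F.map g)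
    {x y z : C} (g : α.obj x ⟶ α.obj y) (g' : α.obj y ⟶ α.obj z) :
    gcPhi α F hsurj (g ≫ g') = gcPhi α F hsurj g ≫ gcPhi α F hsurj g' := by
  obtain ⟨f, f', rfl⟩ := hsurj g
  obtain ⟨k, k', rfl⟩ := hsurj g'
  have h1 : (α.map f - α.map f') ≫ (α.map k - α.map k')
      = α.map (f ≫ k + f' ≫ k') - α.map (f ≫ k' + f' ≫ k) := by
    rw [hadd, hadd, α.map_comp, α.map_comp, α.map_comp, α.map_comp]
    rw [Preadditive.sub_comp, Preadditive.comp_sub, Preadditive.comp_sub]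
    abel
  rw [h1, gcPhi_diff α F hsurj hadd hker hFadd, gcPhi_diff α F hsurj hadd hker hFadd,
    gcPhi_diff α F hsurj hadd hker hFadd, hFadd, hFadd, F.map_comp, F.map_comp,
    F.map_comp, F.map_comp, Preadditive.sub_comp, Preadditive.comp_sub,
    Preadditive.comp_sub]
  abel

theorem gcPhi_id
    (hadd : ∀ {x y : C} (f g : x ⟶ y), α.map (f + g) = α.map f + α.map g)
    (hzero : ∀ x y : C, α.map (0 : x ⟶ y) = 0)
    (hker : ∀ {x y : C} (f f' : x ⟶ y), α.map f = α.map f' ↔ ∃ h : x ⟶ y, f + h = f' + h)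
    (hFadd : ∀ {x y : C} (f g : x ⟶ y), F.map (f + g) = F.map f + F.map g)
    (hFzero : ∀ x y : C, F.map (0 : x ⟶ y) = 0)
    (x : C) : gcPhi α F hsurj (𝟙 (α.obj x)) = 𝟙 (F.obj x) := by
  have : 𝟙 (α.obj x) = α.map (𝟙 x) := (α.map_id x).symm
  rw [this, gcPhi_map α F hsurj hadd hzero hker hFadd hFzero, F.map_id]

theorem gcPhi_conj
    {x x' y y' : C} (p : x' = x) (q : y = y') (g : α.obj x ⟶ α.obj y) :
    gcPhi α F hsurj (eqToHom (congrArg α.obj p) ≫ g ≫ eqToHom (congrArg α.obj q))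
      = eqToHom (congrArg F.obj p) ≫ gcPhi α F hsurj g ≫ eqToHom (congrArg F.obj q) := by
  subst p; subst q; simp

variable (hobj : Function.Bijective α.obj)
variable (hadd : ∀ {x y : C} (f g : x ⟶ y), α.map (f + g) = α.map f + α.map g)
variable (hzero : ∀ x y : C, α.map (0 : x ⟶ y) = 0)
variable (hker : ∀ {x y : C} (f f' : x ⟶ y), α.map f = α.map f' ↔ ∃ h : x ⟶ y, f + h = f' + h)
variable (hFadd : ∀ {x y : C} (f g : x ⟶ y), F.map (f + g) = F.map f + F.map g)
variable (hFzero : ∀ x y : C, F.map (0 : x ⟶ y) = 0)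

/-- The induced functor `D ⥤ E`. -/
noncomputable def gcFunctor : D ⥤ E where
  obj d := F.obj ((Equiv.ofBijective α.obj hobj).symm d)
  map {d1 d2} g := gcPhi α F hsurj
    (eqToHom ((Equiv.ofBijective α.obj hobj).apply_symm_apply d1) ≫ g ≫
     eqToHom ((Equiv.ofBijective α.obj hobj).apply_symm_apply d2).symm)
  map_id d := by
    show gcPhi α F hsurj (eqToHom _ ≫ 𝟙 d ≫ eqToHom _) = _
    erw [Category.id_comp, eqToHom_trans, eqToHom_refl]
    exact gcPhi_id α F hsurj hadd hzero hker hFadd hFzero _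
  map_comp {d1 d2 d3} f g := by
    have key : eqToHom ((Equiv.ofBijective α.obj hobj).apply_symm_apply d1) ≫ (f ≫ g) ≫
        eqToHom ((Equiv.ofBijective α.obj hobj).apply_symm_apply d3).symm
        = (eqToHom ((Equiv.ofBijective α.obj hobj).apply_symm_apply d1) ≫ f ≫
           eqToHom ((Equiv.ofBijective α.obj hobj).apply_symm_apply d2).symm) ≫
          (eqToHom ((Equiv.ofBijective α.obj hobj).apply_symm_apply d2) ≫ g ≫
           eqToHom ((Equiv.ofBijective α.obj hobj).apply_symm_apply d3).symm) := by
      simp only [Category.assoc, eqToHom_trans_assoc, eqToHom_refl, Category.id_comp]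
    show gcPhi α F hsurj _ = gcPhi α F hsurj _ ≫ gcPhi α F hsurj _
    erw [key, gcPhi_comp α F hsurj hadd hker hFadd]
    rfl

theorem gcFunctor_add {d1 d2 : D} (g g' : d1 ⟶ d2) :
    (gcFunctor α F hsurj hobj hadd hzero hker hFadd hFzero).map (g + g')
      = (gcFunctor α F hsurj hobj hadd hzero hker hFadd hFzero).map g
        + (gcFunctor α F hsurj hobj hadd hzero hker hFadd hFzero).map g' := by
  show gcPhi α F hsurj _ = gcPhi α F hsurj _ + gcPhi α F hsurj _
  rw [Preadditive.add_comp, Preadditive.comp_add, gcPhi_add α F hsurj hadd hker hFadd]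
  rfl

theorem gcFunctor_map_alpha {x y : C} (f : x ⟶ y) :
    (gcFunctor α F hsurj hobj hadd hzero hker hFadd hFzero).map (α.map f)
      = eqToHom (congrArg F.obj ((Equiv.ofBijective α.obj hobj).symm_apply_apply x))
        ≫ F.map f
        ≫ eqToHom (congrArg F.obj ((Equiv.ofBijective α.obj hobj).symm_apply_apply y)).symm := by
  show gcPhi α F hsurj _ = _
  erw [gcPhi_conj α F hsurj ((Equiv.ofBijective α.obj hobj).symm_apply_apply x)
    ((Equiv.ofBijective α.obj hobj).symm_apply_apply y).symm (α.map f),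
    gcPhi_map α F hsurj hadd hzero hker hFadd hFzero]

theorem gcFunctor_comm :
    α ⋙ gcFunctor α F hsurj hobj hadd hzero hker hFadd hFzero = F := by
  have hobj' : ∀ x : C, (α ⋙ gcFunctor α F hsurj hobj hadd hzero hker hFadd hFzero).obj x
      = F.obj x :=
    fun x => congrArg F.obj ((Equiv.ofBijective α.obj hobj).symm_apply_apply x)
  refine CategoryTheory.Functor.ext hobj' (fun x y f => ?_)
  show (gcFunctor α F hsurj hobj hadd hzero hker hFadd hFzero).map (α.map f) = _
  rw [gcFunctor_map_alpha α F hsurj hobj hadd hzero hker hFadd hFzero]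
  rfl


/-- An additive functor between preadditive categories preserves differences. -/
theorem gcMap_sub {D : Type u'} [Category.{v'} D] [Preadditive D]
    {E : Type u''} [Category.{v''} E] [Preadditive E] (G : D ⥤ E)
    (hGadd : ∀ {x y : D} (f g : x ⟶ y), G.map (f + g) = G.map f + G.map g)
    {x y : D} (f g : x ⟶ y) : G.map (f - g) = G.map f - G.map g := by
  have hz : G.map (0 : x ⟶ y) = 0 := by
    have := hGadd (0 : x ⟶ y) 0
    rw [add_zero] at this
    exact (left_eq_add.mp this)
  have : G.map (f - g) + G.map g = G.map f := by
    rw [← hGadd, sub_add_cancel]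
  exact eq_sub_of_add_eq this

theorem gcEqToHom_aux {E : Type u''} [Category.{v''} E] {a b c d a' b' : E} (h : a ⟶ b)
    (p : c = a) (q : b = d) (p1 : c = a') (p2 : a' = a) (q2 : b = b') (q1 : b' = d) :
    eqToHom p ≫ h ≫ eqToHom q = eqToHom p1 ≫ (eqToHom p2 ≫ h ≫ eqToHom q2) ≫ eqToHom q1 := by
  subst p2 q2 p1 q1
  simp

end Aux

/-- Group completion of a semi-additive category: let `C` be a semi-additive category
(enriched in commutative monoids, with a zero object and binary biproducts), and let
`α : C ⥤ D` exhibit the preadditive category `D` as the groupification of `C`: `α` is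
bijective on objects, additive, every morphism of `D` is a difference `α.map f - α.map f'`,
and `α.map f = α.map f'` holds exactly when `f + h = f' + h` for some `h` (so each Hom-group
of `D` is the Grothendieck group completion of the corresponding Hom-monoid of `C`). Then
`D` is additive (it has a zero object and biproducts), and for every additive category `E`
every additive functor `C ⥤ E` factors uniquely through `α` via an additive functor
`D ⥤ E`; i.e. precomposition with `α` is a bijection between additive functors `D ⥤ E`
and additive functors `C ⥤ E`. -/
theorem groupCompletion_universal_property
    {C : Type u} [Category.{v} C] [CMonEnriched C] [HasZeroObject C] [HasBinaryBiproducts C]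
    {D : Type u'} [Category.{v'} D] [Preadditive D]
    (α : C ⥤ D) (hobj : Function.Bijective α.obj)
    (hadd : ∀ {x y : C} (f g : x ⟶ y), α.map (f + g) = α.map f + α.map g)
    (hzero : ∀ x y : C, α.map (0 : x ⟶ y) = 0)
    (hsurj : ∀ {x y : C} (g : α.obj x ⟶ α.obj y), ∃ f f' : x ⟶ y, g = α.map f - α.map f')
    (hker : ∀ {x y : C} (f f' : x ⟶ y), α.map f = α.map f' ↔ ∃ h : x ⟶ y, f + h = f' + h) :
    HasZeroObject D ∧ HasBinaryBiproducts D ∧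
    ∀ (E : Type u'') (_ : Category.{v''} E) (_ : Preadditive E) (_ : HasZeroObject E)
      (_ : HasBinaryBiproducts E) (F : C ⥤ E),
      (∀ {x y : C} (f g : x ⟶ y), F.map (f + g) = F.map f + F.map g) →
      (∀ x y : C, F.map (0 : x ⟶ y) = 0) →
      ∃! F' : D ⥤ E,
        (∀ {x y : D} (f g : x ⟶ y), F'.map (f + g) = F'.map f + F'.map g) ∧
        α ⋙ F' = F := by
  obtain ⟨z, hz⟩ := HasZeroObject.zero (C := C)
  refine ⟨?_, ?_, ?_⟩
  · -- zero object
    refine ⟨α.obj z, ?_, ?_⟩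
    · intro Y
      obtain ⟨y, rfl⟩ := hobj.2 Y
      refine Nonempty.intro ⟨⟨0⟩, fun g => ?_⟩
      obtain ⟨f, f', rfl⟩ := hsurj g
      rw [hz.eq_of_src f f', sub_self]
      rfl
    · intro Y
      obtain ⟨y, rfl⟩ := hobj.2 Y
      refine Nonempty.intro ⟨⟨0⟩, fun g => ?_⟩
      obtain ⟨f, f', rfl⟩ := hsurj g
      rw [hz.eq_of_tgt f f', sub_self]
      rfl
  · -- binary biproducts
    constructor
    intro d1 d2
    obtain ⟨x1, rfl⟩ := hobj.2 d1
    obtain ⟨x2, rfl⟩ := hobj.2 d2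
    let b : BinaryBicone (α.obj x1) (α.obj x2) :=
      { pt := α.obj (x1 ⊞ x2)
        fst := α.map biprod.fst
        snd := α.map biprod.snd
        inl := α.map biprod.inl
        inr := α.map biprod.inr
        inl_fst := by rw [← α.map_comp, biprod.inl_fst, α.map_id]
        inl_snd := by rw [← α.map_comp, biprod.inl_snd, hzero]
        inr_fst := by rw [← α.map_comp, biprod.inr_fst, hzero]
        inr_snd := by rw [← α.map_comp, biprod.inr_snd, α.map_id] }
    refine HasBinaryBiproduct.mk ⟨b, CategoryTheory.Limits.isBinaryBilimitOfTotal b ?_⟩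
    show α.map biprod.fst ≫ α.map biprod.inl + α.map biprod.snd ≫ α.map biprod.inr
      = 𝟙 (α.obj (x1 ⊞ x2))
    rw [← α.map_comp, ← α.map_comp, ← hadd, gcAux_total, α.map_id]
  · -- universal property
    intro E catE preE _ _ F hFadd hFzero
    refine ⟨gcFunctor α F hsurj hobj hadd hzero hker hFadd hFzero,
      ⟨fun f g => gcFunctor_add α F hsurj hobj hadd hzero hker hFadd hFzero f g,
       gcFunctor_comm α F hsurj hobj hadd hzero hker hFadd hFzero⟩, ?_⟩
    rintro F'' ⟨hF''add, hF''comm⟩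
    have hobj' : ∀ d : D, F''.obj d
        = (gcFunctor α F hsurj hobj hadd hzero hker hFadd hFzero).obj d := by
      intro d
      obtain ⟨x, rfl⟩ := hobj.2 d
      have h1 : F''.obj (α.obj x) = F.obj x := Functor.congr_obj hF''comm x
      have h2 : (gcFunctor α F hsurj hobj hadd hzero hker hFadd hFzero).obj (α.obj x)
          = F.obj x :=
        congrArg F.obj ((Equiv.ofBijective α.obj hobj).symm_apply_apply x)
      rw [h1, h2]
    refine CategoryTheory.Functor.ext hobj' ?_
    intro d1 d2 g
    obtain ⟨x, rfl⟩ := hobj.2 d1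
    obtain ⟨y, rfl⟩ := hobj.2 d2
    obtain ⟨f, f', rfl⟩ := hsurj g
    rw [gcMap_sub F'' hF''add,
      gcMap_sub (gcFunctor α F hsurj hobj hadd hzero hker hFadd hFzero)
        (gcFunctor_add α F hsurj hobj hadd hzero hker hFadd hFzero),
      gcFunctor_map_alpha α F hsurj hobj hadd hzero hker hFadd hFzero,
      gcFunctor_map_alpha α F hsurj hobj hadd hzero hker hFadd hFzero]
    erw [Preadditive.sub_comp, Preadditive.comp_sub]
    have hcf := Functor.congr_hom hF''comm f
    have hcf' := Functor.congr_hom hF''comm f'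
    rw [Functor.comp_map] at hcf hcf'
    rw [hcf, hcf']
    congr 1 <;> exact gcEqToHom_aux _ _ _ _ _ _ _
end
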